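/- Let G be a finite simple graph and x, y distinct vertices. For every natural number r ≥ 1, the number of cliques of size r in G is at most the number of cliques of size r in C_{xy}(G). In particular, compression cannot decrease the total number of cliques of a graph. -/

import Mathlib

open SimpleGraph

/-- The compression `C_{xy}(G)`: every edge `{x,v}` of `G` with `v ≠ y` and `v` not adjacent
to `y` in `G` is replaced by the edge `{y,v}`; all other edges are unchanged. -/
def compress {V : Type*} (G : SimpleGraph V) (x y : V) : SimpleGraph V where
  Adj a b :=
    (G.Adj a b ∧ ¬ ((a = x ∧ b ≠ y ∧ ¬ G.Adj y b) ∨ (b = x ∧ a ≠ y ∧ ¬ G.Adj y a))) ∨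
    (a = y ∧ b ≠ y ∧ G.Adj x b ∧ ¬ G.Adj y b) ∨
    (b = y ∧ a ≠ y ∧ G.Adj x a ∧ ¬ G.Adj y a)
  symm := by
    constructor
    intro a b h
    rcases h with ⟨hab, hn⟩ | h | h
    · exact Or.inl ⟨hab.symm, fun hc => hn hc.symm⟩
    · exact Or.inr (Or.inr h)
    · exact Or.inr (Or.inl h)
  loopless := by
    constructor
    intro a h
    rcases h with ⟨hab, _⟩ | ⟨_, h, _⟩ | ⟨_, h, _⟩
    · exact G.irrefl hab
    · exact h ‹_›
    · exact h ‹_›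

/-- The total number of cliques (of all sizes ≥ 1) of a graph. -/
noncomputable def numCliques {V : Type*} (G : SimpleGraph V) : ℕ :=
  Nat.card {s : Finset V // s.Nonempty ∧ G.IsClique (s : Set V)}

open scoped Classical

/-- auxiliary map on cliques -/
noncomputable def cmap {V : Type*} (G : SimpleGraph V) (x y : V) (s : Finset V) : Finset V :=
  if x ∈ s ∧ y ∉ s ∧ ∃ v ∈ s, v ≠ x ∧ ¬ G.Adj y v then insert y (s.erase x) else s

lemma cmap_card {V : Type*} (G : SimpleGraph V) (x y : V) (hxy : x ≠ y) (s : Finset V) :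
    (cmap G x y s).card = s.card := by
  unfold cmap
  split_ifs with h
  · obtain ⟨hx, hy, -⟩ := h
    rw [Finset.card_insert_of_notMem (by simp [hy]), Finset.card_erase_of_mem hx,
      Nat.sub_add_cancel (Finset.card_pos.mpr ⟨x, hx⟩)]
  · rfl

lemma cmap_clique {V : Type*} (G : SimpleGraph V) (x y : V) (hxy : x ≠ y) (s : Finset V)
    (hs : G.IsClique (s : Set V)) :
    (compress G x y).IsClique ((cmap G x y s : Finset V) : Set V) := by
  unfold cmap
  split_ifs with h
  · obtain ⟨hx, hy, -⟩ := h
    intro a ha b hb hab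
    rw [Finset.mem_coe, Finset.mem_insert, Finset.mem_erase] at ha hb
    rcases ha with ha | ⟨hane, has⟩
    · subst ha
      rcases hb with hb | ⟨hbne, hbs⟩
      · exact absurd hb.symm hab
      · have hbny : b ≠ a := fun hbe => hy (hbe ▸ hbs)
        by_cases hyb : G.Adj a b
        · exact Or.inl ⟨hyb, by rintro (⟨h1, -⟩ | ⟨h1, -⟩); exacts [hxy h1.symm, hbne h1]⟩
        · exact Or.inr (Or.inl ⟨rfl, hbny, hs hx hbs (fun he => hbne he.symm), hyb⟩)
    · rcases hb with hb | ⟨hbne, hbs⟩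
      · subst hb
        have hany : a ≠ b := fun hae => hy (hae ▸ has)
        by_cases hya : G.Adj b a
        · exact Or.inl ⟨hya.symm, by rintro (⟨h1, -⟩ | ⟨h1, -⟩); exacts [hane h1, hxy h1.symm]⟩
        · exact Or.inr (Or.inr ⟨rfl, hany, hs hx has (fun he => hane he.symm), hya⟩)
      · exact Or.inl ⟨hs has hbs hab, by rintro (⟨h1, -⟩ | ⟨h1, -⟩); exacts [hane h1, hbne h1]⟩
  · intro a ha b hb hab
    have hadj := hs ha hb hab
    refine Or.inl ⟨hadj, ?_⟩
    rintro (⟨rfl, hbny, hnyb⟩ | ⟨rfl, hany, hnya⟩)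
    · exact h ⟨ha, fun hys => hnyb (hs hys hb (Ne.symm hbny)),
        b, hb, fun he => hab he.symm, hnyb⟩
    · exact h ⟨hb, fun hys => hnya (hs hys ha (Ne.symm hany)),
        a, ha, hab, hnya⟩
lemma cmap_inj {V : Type*} (G : SimpleGraph V) (x y : V) (hxy : x ≠ y) (s t : Finset V)
    (hs : G.IsClique (s : Set V)) (ht : G.IsClique (t : Set V))
    (he : cmap G x y s = cmap G x y t) : s = t := by
  unfold cmap at he
  split_ifs at he with h1 h2 h2
  · -- both bad
    have hys : y ∉ s.erase x := fun hm => h1.2.1 (Finset.mem_of_mem_erase hm)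
    have hyt : y ∉ t.erase x := fun hm => h2.2.1 (Finset.mem_of_mem_erase hm)
    have h3 : s.erase x = t.erase x := by
      have := congrArg (fun u : Finset V => u.erase y) he
      simpa [Finset.erase_insert hys, Finset.erase_insert hyt] using this
    rw [← Finset.insert_erase h1.1, ← Finset.insert_erase h2.1, h3]
  · exfalso
    obtain ⟨hx, hy, v, hv, hvx, hnyv⟩ := h1
    have hvt : v ∈ t := he ▸ (Finset.mem_insert_of_mem (Finset.mem_erase.mpr ⟨hvx, hv⟩))
    have hyt : y ∈ t := he ▸ Finset.mem_insert_self y _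
    exact hnyv (ht hyt hvt (fun h => hy (h ▸ hv)))
  · exfalso
    obtain ⟨hx, hy, v, hv, hvx, hnyv⟩ := h2
    have hvs : v ∈ s := he.symm ▸ (Finset.mem_insert_of_mem (Finset.mem_erase.mpr ⟨hvx, hv⟩))
    have hys : y ∈ s := he.symm ▸ Finset.mem_insert_self y _
    exact hnyv (hs hys hvs (fun h => hy (h ▸ hv)))
  · exact he

/-- For every `r ≥ 1`, the number of cliques of size `r` in `G` is at most the number of
cliques of size `r` in `C_{xy}(G)`; in particular compression cannot decrease the total
number of cliques. -/
theorem compress_cliques {V : Type*} [Fintype V] (G : SimpleGraph V) (x y : V) (hxy : x ≠ y) :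
    (∀ r : ℕ, 1 ≤ r →
      Nat.card {s : Finset V // G.IsNClique r s}
        ≤ Nat.card {s : Finset V // (compress G x y).IsNClique r s}) ∧
    numCliques G ≤ numCliques (compress G x y) := by
  constructor
  · intro r _hr
    apply Nat.card_le_card_of_injective
      (fun p : {s : Finset V // G.IsNClique r s} =>
        (⟨cmap G x y p.1, cmap_clique G x y hxy p.1 p.2.1,
          (cmap_card G x y hxy p.1).trans p.2.2⟩ :
          {s : Finset V // (compress G x y).IsNClique r s}))
    intro ⟨s, hs⟩ ⟨t, ht⟩ h
    exact Subtype.ext (cmap_inj G x y hxy s t hs.1 ht.1 (congrArg Subtype.val h))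
  · unfold numCliques
    apply Nat.card_le_card_of_injective
      (fun p : {s : Finset V // s.Nonempty ∧ G.IsClique (s : Set V)} =>
        (⟨cmap G x y p.1, Finset.card_pos.mp (by rw [cmap_card G x y hxy]; exact Finset.card_pos.mpr p.2.1),
          cmap_clique G x y hxy p.1 p.2.2⟩ :
          {s : Finset V // s.Nonempty ∧ (compress G x y).IsClique (s : Set V)}))
    intro ⟨s, hs⟩ ⟨t, ht⟩ h
    exact Subtype.ext (cmap_inj G x y hxy s t hs.2 ht.2 (congrArg Subtype.val h))
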